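/- The function h(x) = arctan( x·(π² − (4 − π²/3)x² − (4/3 − 2π²/15)x⁴)/(π² − 4x²) ) − x is strictly increasing on (0, 1.371), and h(0) = 0. -/

import Mathlib

open Real

lemma pi_sq_lb : (9.8696002 : ℝ) < π ^ 2 := by
  nlinarith [Real.pi_gt_d6]

lemma pi_sq_ub : π ^ 2 < (9.8696066 : ℝ) := by
  nlinarith [Real.pi_lt_d6, Real.pi_gt_d6]

lemma qpos (t : ℝ) (h0 : 0 ≤ t) (h1 : t ≤ 1.879641) :
    0 < (56 / 15 * π ^ 2 - 17 / 45 * π ^ 4) +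
      (-32 / 3 + 88 / 45 * π ^ 2 - 4 / 45 * π ^ 4) * t +
      (-(4 / 3 - 2 * π ^ 2 / 15) ^ 2) * t ^ 2 := by
  have h2l := pi_sq_lb
  have h2u := pi_sq_ub
  have hprod : 0 ≤ (π ^ 2 - 9.8696002) * (9.8696066 - π ^ 2) :=
    mul_nonneg (by linarith) (by linarith)
  have hc8 : (-32 / 3 + 88 / 45 * π ^ 2 - 4 / 45 * π ^ 4) < 0 := by nlinarith
  have hc10 : (-(4 / 3 - 2 * π ^ 2 / 15) ^ 2) ≤ 0 := neg_nonpos.mpr (sq_nonneg _)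
  have ht2 : t ^ 2 ≤ 1.879641 ^ 2 := by nlinarith
  nlinarith [mul_le_mul_of_nonpos_left h1 hc8.le,
    mul_le_mul_of_nonpos_left ht2 hc10, hprod]

lemma key (x : ℝ) (hx0 : 0 < x) (hx1 : x < 1.371) :
    (π ^ 2 - 4 * x ^ 2) ^ 2 +
      (x * (π ^ 2 - (4 - π ^ 2 / 3) * x ^ 2 - (4 / 3 - 2 * π ^ 2 / 15) * x ^ 4)) ^ 2 <
    (π ^ 2 - 3 * (4 - π ^ 2 / 3) * x ^ 2 - 5 * (4 / 3 - 2 * π ^ 2 / 15) * x ^ 4) *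
        (π ^ 2 - 4 * x ^ 2) -
      (x * (π ^ 2 - (4 - π ^ 2 / 3) * x ^ 2 - (4 / 3 - 2 * π ^ 2 / 15) * x ^ 4)) * (-(8 * x)) := by
  have ht : x ^ 2 ≤ (1.879641 : ℝ) := by nlinarith
  have hq := qpos (x ^ 2) (by positivity) ht
  have hx6 : 0 < x ^ 6 := by positivity
  nlinarith [mul_pos hx6 hq]

lemma den_pos (x : ℝ) (hx0 : 0 < x) (hx1 : x < 1.371) : 0 < π ^ 2 - 4 * x ^ 2 := by
  have := pi_sq_lb
  nlinarith

theorem stmt11 :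
    StrictMonoOn (fun x : ℝ =>
      Real.arctan (x * (π ^ 2 - (4 - π ^ 2 / 3) * x ^ 2 - (4 / 3 - 2 * π ^ 2 / 15) * x ^ 4) /
        (π ^ 2 - 4 * x ^ 2)) - x) (Set.Ioo 0 1.371) ∧
    Real.arctan (0 * (π ^ 2 - (4 - π ^ 2 / 3) * 0 ^ 2 - (4 / 3 - 2 * π ^ 2 / 15) * 0 ^ 4) /
        (π ^ 2 - 4 * 0 ^ 2)) - 0 = 0 := by
  constructor
  · apply strictMonoOn_of_deriv_pos (convex_Ioo 0 1.371)
    · apply ContinuousOn.sub _ continuousOn_id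
      apply Real.continuous_arctan.comp_continuousOn
      apply ContinuousOn.div
      · exact (by continuity : Continuous fun x : ℝ =>
          x * (π ^ 2 - (4 - π ^ 2 / 3) * x ^ 2 - (4 / 3 - 2 * π ^ 2 / 15) * x ^ 4)).continuousOn
      · exact (by continuity : Continuous fun x : ℝ => π ^ 2 - 4 * x ^ 2).continuousOn
      · intro x hx
        exact (den_pos x hx.1 hx.2).ne'
    · intro x hx
      rw [interior_Ioo] at hx
      obtain ⟨hx0, hx1⟩ := hx
      have hDpos := den_pos x hx0 hx1
      have hD : π ^ 2 - 4 * x ^ 2 ≠ 0 := hDpos.ne'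
      have hN : HasDerivAt
          (fun y : ℝ => y * (π ^ 2 - (4 - π ^ 2 / 3) * y ^ 2 - (4 / 3 - 2 * π ^ 2 / 15) * y ^ 4))
          (π ^ 2 - 3 * (4 - π ^ 2 / 3) * x ^ 2 - 5 * (4 / 3 - 2 * π ^ 2 / 15) * x ^ 4) x := by
        have h1 := (hasDerivAt_id x).mul
          (((hasDerivAt_const x (π ^ 2)).sub
              (((hasDerivAt_pow 2 x)).const_mul (4 - π ^ 2 / 3))).sub
            (((hasDerivAt_pow 4 x)).const_mul (4 / 3 - 2 * π ^ 2 / 15)))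
        simp only [id_eq] at h1
        refine h1.congr_deriv ?_
        simp only [Pi.sub_apply]
        norm_num
        ring
      have hDen : HasDerivAt (fun y : ℝ => π ^ 2 - 4 * y ^ 2) (-(8 * x)) x := by
        have h2 := (hasDerivAt_const x (π ^ 2)).sub (((hasDerivAt_pow 2 x)).const_mul 4)
        refine h2.congr_deriv ?_
        norm_num
        ring
      have hg := hN.div hDen hD
      have hh := (hg.arctan).sub (hasDerivAt_id' (𝕜 := ℝ) (x := x))
      have hh' := hh.deriv
      simp only [Pi.sub_def, Pi.div_apply] at hh'
      rw [hh']
      set N := x * (π ^ 2 - (4 - π ^ 2 / 3) * x ^ 2 - (4 / 3 - 2 * π ^ 2 / 15) * x ^ 4) with hNdef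
      set N' := π ^ 2 - 3 * (4 - π ^ 2 / 3) * x ^ 2 - 5 * (4 / 3 - 2 * π ^ 2 / 15) * x ^ 4
        with hN'def
      set D := π ^ 2 - 4 * x ^ 2 with hDdef
      have h1 : (0 : ℝ) < 1 + (N / D) ^ 2 := by positivity
      have hD2 : (0 : ℝ) < D ^ 2 := by positivity
      have hsq : (N / D) ^ 2 * D ^ 2 = N ^ 2 := by field_simp
      have hkey := key x hx0 hx1
      rw [← hNdef, ← hN'def, ← hDdef] at hkey
      rw [sub_pos, one_div_mul_eq_div, lt_div_iff₀ h1, lt_div_iff₀ hD2]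
      calc 1 * (1 + (N / D) ^ 2) * D ^ 2 = D ^ 2 + N ^ 2 := by
            field_simp
          _ < _ := hkey
  · simp
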